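/- arXiv:1809.02741 — 3 statements merged into one kernel-verified Lean document; each statement's English description precedes it below -/
import Mathlib

section
/- Derivative bounds for the smoothed-maximum composition: Let d ≥ 2, δ̄ > 0, β := (log d)/δ̄, and F_β(v) := β^{-1}·log(Σ_{j=1}^d exp(β v_j)) for v ∈ ℝ^d. Let g: ℝ → ℝ be three times differentiable with ‖g'‖_∞ ≤ δ̄^{-1}, ‖g''‖_∞ ≤ K·δ̄^{-2}, and ‖g'''‖_∞ ≤ K·δ̄^{-3} for some constant K. Then the composition φ := g ∘ F_β satisfies sup_{v∈ℝ^d} Σ_{j,k=1}^d |∂_j∂_k φ(v)| ≤ C·(log d)/δ̄² and sup_{v∈ℝ^d} Σ_{j,k,ℓ=1}^d |∂_j∂_k∂_ℓ φ(v)| ≤ C·(log d)²/δ̄³, where C depends only on K. -/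
open scoped BigOperators

/-- Second-order partial derivative `∂_j ∂_k φ (v)` of `φ : ℝ^d → ℝ`. -/
noncomputable def partial2 {d : ℕ} (φ : (Fin d → ℝ) → ℝ) (j k : Fin d)
    (v : Fin d → ℝ) : ℝ :=
  iteratedFDeriv ℝ 2 φ v ![Pi.single j 1, Pi.single k 1]

/-- Third-order partial derivative `∂_j ∂_k ∂_ℓ φ (v)` of `φ : ℝ^d → ℝ`. -/
noncomputable def partial3 {d : ℕ} (φ : (Fin d → ℝ) → ℝ) (j k l : Fin d)
    (v : Fin d → ℝ) : ℝ :=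
  iteratedFDeriv ℝ 3 φ v ![Pi.single j 1, Pi.single k 1, Pi.single l 1]

namespace LSE

noncomputable section

variable {d : ℕ}

def S (β : ℝ) (w : Fin d → ℝ) : ℝ := ∑ i, Real.exp (β * w i)
def P (β : ℝ) (k : Fin d) (w : Fin d → ℝ) : ℝ := Real.exp (β * w k) / S β w
def Fb (β : ℝ) (w : Fin d → ℝ) : ℝ := β⁻¹ * Real.log (S β w)
def dd (j k : Fin d) : ℝ := if j = k then 1 else 0

def LS (β : ℝ) (w : Fin d → ℝ) : (Fin d → ℝ) →L[ℝ] ℝ :=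
  ∑ i, Real.exp (β * w i) • (β • (ContinuousLinearMap.proj i : (Fin d → ℝ) →L[ℝ] ℝ))

def LF (β : ℝ) (w : Fin d → ℝ) : (Fin d → ℝ) →L[ℝ] ℝ :=
  β⁻¹ • ((S β w)⁻¹ • LS β w)

def LP (β : ℝ) (k : Fin d) (w : Fin d → ℝ) : (Fin d → ℝ) →L[ℝ] ℝ :=
  Real.exp (β * w k) • ((-(S β w ^ 2)⁻¹) • LS β w)
    + (S β w)⁻¹ • (Real.exp (β * w k) • (β • (ContinuousLinearMap.proj k : (Fin d → ℝ) →L[ℝ] ℝ)))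

variable {β : ℝ}

lemma S_pos (hd : 0 < d) (β : ℝ) (w : Fin d → ℝ) : 0 < S β w := by
  have : Nonempty (Fin d) := ⟨⟨0, hd⟩⟩
  exact Finset.sum_pos (fun i _ => Real.exp_pos _) Finset.univ_nonempty

lemma P_nonneg (hd : 0 < d) (β : ℝ) (k : Fin d) (w : Fin d → ℝ) : 0 ≤ P β k w :=
  div_nonneg (Real.exp_pos _).le (S_pos hd β w).le

lemma P_sum (hd : 0 < d) (β : ℝ) (w : Fin d → ℝ) : ∑ k, P β k w = 1 := by
  simp only [P]
  rw [← Finset.sum_div]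
  exact div_self (S_pos hd β w).ne'

lemma P_le_one (hd : 0 < d) (β : ℝ) (k : Fin d) (w : Fin d → ℝ) : P β k w ≤ 1 := by
  have h := Finset.single_le_sum (f := fun i => P β i w)
    (fun i _ => P_nonneg hd β i w) (Finset.mem_univ k)
  rw [P_sum hd β w] at h
  exact h

lemma hasFDerivAt_single (β : ℝ) (i : Fin d) (w : Fin d → ℝ) :
    HasFDerivAt (fun w : Fin d → ℝ => Real.exp (β * w i))
      (Real.exp (β * w i) • (β • (ContinuousLinearMap.proj i : (Fin d → ℝ) →L[ℝ] ℝ))) w := by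
  have h1 : HasFDerivAt (fun w : Fin d → ℝ => β * w i)
      (β • (ContinuousLinearMap.proj i : (Fin d → ℝ) →L[ℝ] ℝ)) w :=
    (ContinuousLinearMap.proj i : (Fin d → ℝ) →L[ℝ] ℝ).hasFDerivAt.const_mul β
  simpa [Function.comp_def] using (Real.hasDerivAt_exp (β * w i)).comp_hasFDerivAt w h1

lemma hasFDerivAt_S (β : ℝ) (w : Fin d → ℝ) : HasFDerivAt (S β) (LS β w) w :=
  HasFDerivAt.fun_sum fun i _ => hasFDerivAt_single β i w

lemma hasFDerivAt_Fb (hd : 0 < d) (β : ℝ) (w : Fin d → ℝ) :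
    HasFDerivAt (Fb β) (LF β w) w := by
  have h := ((Real.hasDerivAt_log (S_pos hd β w).ne').comp_hasFDerivAt w
    (hasFDerivAt_S β w)).const_mul β⁻¹
  exact h

lemma hasFDerivAt_P (hd : 0 < d) (β : ℝ) (k : Fin d) (w : Fin d → ℝ) :
    HasFDerivAt (P β k) (LP β k w) w := by
  have hinv : HasFDerivAt (fun w : Fin d → ℝ => (S β w)⁻¹)
      ((-(S β w ^ 2)⁻¹) • LS β w) w := by
    simpa [Function.comp_def, ← neg_smul] using
      (hasDerivAt_inv (S_pos hd β w).ne').comp_hasFDerivAt w (hasFDerivAt_S β w)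
  exact (hasFDerivAt_single β k w).mul hinv

lemma LS_single (β : ℝ) (w : Fin d → ℝ) (j : Fin d) :
    LS β w (Pi.single j 1) = Real.exp (β * w j) * β := by
  simp [LS, Pi.single_apply, mul_ite, Finset.sum_ite_eq']

lemma LF_single (hd : 0 < d) (hβ : β ≠ 0) (w : Fin d → ℝ) (j : Fin d) :
    LF β w (Pi.single j 1) = P β j w := by
  have hS := (S_pos hd β w).ne'
  simp only [LF, ContinuousLinearMap.smul_apply, smul_eq_mul, LS_single, P]
  field_simp

lemma LP_single (hd : 0 < d) (β : ℝ) (k : Fin d) (w : Fin d → ℝ) (j : Fin d) :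
    LP β k w (Pi.single j 1) = β * P β k w * (dd j k - P β j w) := by
  have hS := (S_pos hd β w).ne'
  simp only [LP, ContinuousLinearMap.add_apply, ContinuousLinearMap.smul_apply,
    ContinuousLinearMap.proj_apply, smul_eq_mul, LS_single, P, dd, Pi.single_apply]
  by_cases hjk : j = k
  · subst hjk; simp only [if_pos rfl]
    field_simp
    ring
  · rw [if_neg hjk, if_neg (Ne.symm hjk)]
    field_simp
    ring

lemma contDiff_S (β : ℝ) : ContDiff ℝ 3 (S (d := d) β) :=
  ContDiff.sum fun i _ =>
    Real.contDiff_exp.comp (contDiff_const.mul (contDiff_apply ℝ ℝ i))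

lemma contDiff_Fb (hd : 0 < d) (β : ℝ) : ContDiff ℝ 3 (Fb (d := d) β) := by
  rw [contDiff_iff_contDiffAt]
  intro w
  exact contDiffAt_const.mul
    ((Real.contDiffAt_log.2 (S_pos hd β w).ne').comp w (contDiff_S β).contDiffAt)

lemma mul_abs_le {x X y Y : ℝ} (hx : |x| ≤ X) (hy : |y| ≤ Y) : |x * y| ≤ X * Y := by
  rw [abs_mul]
  exact mul_le_mul hx hy (abs_nonneg _) ((abs_nonneg x).trans hx)

end
end LSE

open LSE in
set_option maxHeartbeats 2000000 in
/-- **Derivative bounds for the smoothed-maximum composition.**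
Let `d ≥ 2`, `δ̄ > 0`, `β := (log d)/δ̄` and let
`F_β(v) := β⁻¹ log (Σ_j exp (β v_j))` be the log-sum-exp approximation of the maximum.
If `g : ℝ → ℝ` is three times differentiable with `‖g'‖_∞ ≤ δ̄⁻¹`,
`‖g''‖_∞ ≤ K δ̄⁻²` and `‖g'''‖_∞ ≤ K δ̄⁻³`, then `φ := g ∘ F_β` satisfies
`Σ_{j,k} |∂_j∂_k φ(v)| ≤ C (log d)/δ̄²` and
`Σ_{j,k,ℓ} |∂_j∂_k∂_ℓ φ(v)| ≤ C (log d)²/δ̄³` for all `v`, where `C` depends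
only on `K`. -/
theorem lse_composition_derivative_bounds (K : ℝ) (hK : 0 ≤ K) :
    ∃ C : ℝ, 0 < C ∧
      ∀ (d : ℕ), 2 ≤ d →
      ∀ (δb : ℝ), 0 < δb →
      ∀ g : ℝ → ℝ, ContDiff ℝ 3 g →
        (∀ x, |iteratedDeriv 1 g x| ≤ δb⁻¹) →
        (∀ x, |iteratedDeriv 2 g x| ≤ K / δb ^ 2) →
        (∀ x, |iteratedDeriv 3 g x| ≤ K / δb ^ 3) →
        ∀ v : Fin d → ℝ,
          (∑ j, ∑ k, |partial2
              (fun w : Fin d → ℝ => g ((Real.log d / δb)⁻¹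
                * Real.log (∑ i, Real.exp ((Real.log d / δb) * w i)))) j k v|
            ≤ C * Real.log d / δb ^ 2) ∧
          (∑ j, ∑ k, ∑ l, |partial3
              (fun w : Fin d → ℝ => g ((Real.log d / δb)⁻¹
                * Real.log (∑ i, Real.exp ((Real.log d / δb) * w i)))) j k l v|
            ≤ C * (Real.log d) ^ 2 / δb ^ 3) := by
  refine ⟨30 * (K + 1), by positivity, ?_⟩
  intro d hd2 δb hδb g hg h1 h2 h3 v
  have hd : 0 < d := by omega
  have hLpos : 0 < Real.log d := Real.log_pos (by exact_mod_cast hd2)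
  set β : ℝ := Real.log d / δb with hβdef
  have hβpos : 0 < β := div_pos hLpos hδb
  have hβne : β ≠ 0 := hβpos.ne'
  set g1 : ℝ → ℝ := deriv g with hg1def
  set g2 : ℝ → ℝ := deriv g1 with hg2def
  set g3 : ℝ → ℝ := deriv g2 with hg3def
  -- smoothness of g and its derivatives
  have e3 : (3 : WithTop ℕ∞) = 2 + 1 := by norm_num
  have e2 : (2 : WithTop ℕ∞) = 1 + 1 := by norm_num
  have hgg := contDiff_succ_iff_deriv.mp (e3 ▸ hg)
  have hD0 : Differentiable ℝ g := hgg.1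
  have hCg1 : ContDiff ℝ 2 g1 := hgg.2.2
  have hgg1 := contDiff_succ_iff_deriv.mp (e2 ▸ hCg1)
  have hD1 : Differentiable ℝ g1 := hgg1.1
  have hCg2 : ContDiff ℝ 1 g2 := hgg1.2.2
  have hD2 : Differentiable ℝ g2 := hCg2.differentiable (by norm_num)
  have hder0 : ∀ x, HasDerivAt g (g1 x) x := fun x => (hD0 x).hasDerivAt
  have hder1 : ∀ x, HasDerivAt g1 (g2 x) x := fun x => (hD1 x).hasDerivAt
  have hder2 : ∀ x, HasDerivAt g2 (g3 x) x := fun x => (hD2 x).hasDerivAt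
  -- the composition
  set φ : (Fin d → ℝ) → ℝ := fun w => g (Fb β w) with hφdef
  have hFb3 : ContDiff ℝ 3 (Fb (d := d) β) := contDiff_Fb hd β
  have hφ3 : ContDiff ℝ 3 φ := hg.comp hFb3
  have hC2 : ContDiff ℝ 2 (fderiv ℝ φ) := hφ3.fderiv_right (by norm_num)
  have hC1 : ContDiff ℝ 1 (fderiv ℝ (fderiv ℝ φ)) := hC2.fderiv_right (by norm_num)
  -- first derivative
  have hgF : ∀ w, HasFDerivAt φ (g1 (Fb β w) • LF β w) w := fun w => by
    simpa [Function.comp_def] using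
      (hder0 (Fb β w)).comp_hasFDerivAt w (hasFDerivAt_Fb hd β w)
  have hg1F : ∀ w, HasFDerivAt (fun y => g1 (Fb β y)) (g2 (Fb β w) • LF β w) w := fun w => by
    simpa [Function.comp_def] using
      (hder1 (Fb β w)).comp_hasFDerivAt w (hasFDerivAt_Fb hd β w)
  have hg2F : ∀ w, HasFDerivAt (fun y => g2 (Fb β y)) (g3 (Fb β w) • LF β w) w := fun w => by
    simpa [Function.comp_def] using
      (hder2 (Fb β w)).comp_hasFDerivAt w (hasFDerivAt_Fb hd β w)
  set P1 : Fin d → (Fin d → ℝ) → ℝ := fun k y => g1 (Fb β y) * P β k y with hP1def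
  have hfφ : ∀ w k, fderiv ℝ φ w (Pi.single k 1) = P1 k w := by
    intro w k
    rw [(hgF w).fderiv]
    simp [LF_single hd hβne, hP1def]
  -- second derivative
  have hP1d : ∀ k w, HasFDerivAt (P1 k)
      (g1 (Fb β w) • LP β k w + P β k w • (g2 (Fb β w) • LF β w)) w :=
    fun k w => (hg1F w).mul (hasFDerivAt_P hd β k w)
  set Φ2 : Fin d → Fin d → (Fin d → ℝ) → ℝ := fun j k y =>
    g2 (Fb β y) * (P β j y * P β k y)
      + g1 (Fb β y) * (β * P β k y * (dd j k - P β j y)) with hΦ2def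
  have hfP1 : ∀ k w j, fderiv ℝ (P1 k) w (Pi.single j 1) = Φ2 j k w := by
    intro k w j
    rw [(hP1d k w).fderiv]
    simp [LP_single hd β, LF_single hd hβne, hΦ2def]
    ring
  -- third derivative
  have hΦ2d : ∀ k l w, HasFDerivAt (fun y => Φ2 k l y)
      ((g2 (Fb β w) • (P β k w • LP β l w + P β l w • LP β k w)
          + (P β k w * P β l w) • (g3 (Fb β w) • LF β w))
        + (g1 (Fb β w) • ((β * P β l w) • (-LP β k w) + (dd k l - P β k w) • (β • LP β l w))
          + (β * P β l w * (dd k l - P β k w)) • (g2 (Fb β w) • LF β w))) w := by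
    intro k l w
    exact ((hg2F w).mul ((hasFDerivAt_P hd β k w).mul (hasFDerivAt_P hd β l w))).add
      ((hg1F w).mul (((hasFDerivAt_P hd β l w).const_mul β).mul
        ((hasFDerivAt_P hd β k w).const_sub (dd k l))))
  set Φ3 : Fin d → Fin d → Fin d → (Fin d → ℝ) → ℝ := fun j k l y =>
    g3 (Fb β y) * (P β j y * (P β k y * P β l y))
      + g2 (Fb β y) * (β * (P β k y * (P β l y * (dd j l - P β j y))))
      + g2 (Fb β y) * (β * (P β l y * (P β k y * (dd j k - P β j y))))
      - g1 (Fb β y) * (β ^ 2 * (P β l y * (P β k y * (dd j k - P β j y))))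
      + g1 (Fb β y) * (β ^ 2 * ((dd k l - P β k y) * (P β l y * (dd j l - P β j y))))
      + g2 (Fb β y) * (β * (P β l y * ((dd k l - P β k y) * P β j y))) with hΦ3def
  have hfΦ2 : ∀ k l w j, fderiv ℝ (fun y => Φ2 k l y) w (Pi.single j 1) = Φ3 j k l w := by
    intro k l w j
    rw [(hΦ2d k l w).fderiv]
    simp [LP_single hd β, LF_single hd hβne, hΦ3def]
    ring
  -- reduction of partial2
  have hp2 : ∀ j k, partial2 φ j k v = Φ2 j k v := by
    intro j k
    have h0 : partial2 φ j k v
        = fderiv ℝ (fderiv ℝ φ) v (Pi.single j 1) (Pi.single k 1) := by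
      rw [partial2, iteratedFDeriv_two_apply]
      simp
    rw [h0]
    have hflip : fderiv ℝ (fun y => fderiv ℝ φ y (Pi.single k 1)) v
        = (fderiv ℝ (fderiv ℝ φ) v).flip (Pi.single k 1) := by
      rw [fderiv_clm_apply (hC2.differentiable (by norm_num) v) (differentiableAt_const _)]
      simp
    have h1' : fderiv ℝ (fderiv ℝ φ) v (Pi.single j 1) (Pi.single k 1)
        = fderiv ℝ (fun y => fderiv ℝ φ y (Pi.single k 1)) v (Pi.single j 1) := by
      rw [hflip]; rfl
    rw [h1']
    have hfun : (fun y => fderiv ℝ φ y (Pi.single k 1)) = P1 k := funext fun y => hfφ y k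
    rw [hfun, hfP1]
  -- reduction of partial3
  have hp3 : ∀ j k l, partial3 φ j k l v = Φ3 j k l v := by
    intro j k l
    have h0 : partial3 φ j k l v
        = fderiv ℝ (fderiv ℝ (fderiv ℝ φ)) v (Pi.single j 1) (Pi.single k 1) (Pi.single l 1) := by
      have e : partial3 φ j k l v = iteratedFDeriv ℝ (2 + 1) φ v
          ![Pi.single j 1, Pi.single k 1, Pi.single l 1] := rfl
      rw [e, iteratedFDeriv_succ_apply_right]
      have hinit : Fin.init ![Pi.single j 1, Pi.single k 1, (Pi.single l 1 : Fin d → ℝ)]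
          = ![Pi.single j 1, Pi.single k 1] := by
        funext i
        fin_cases i <;> rfl
      have hlast : (![Pi.single j 1, Pi.single k 1, (Pi.single l 1 : Fin d → ℝ)]) (Fin.last 2)
          = Pi.single l 1 := rfl
      rw [hinit, hlast, iteratedFDeriv_two_apply]
      simp
    rw [h0]
    -- push the last two vectors inside
    have hd2diff : ∀ y, DifferentiableAt ℝ (fderiv ℝ (fderiv ℝ φ)) y :=
      fun y => (hC1.differentiable (by norm_num)) y
    have hflipk : fderiv ℝ (fun y => fderiv ℝ (fderiv ℝ φ) y (Pi.single k 1)) v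
        = (fderiv ℝ (fderiv ℝ (fderiv ℝ φ)) v).flip (Pi.single k 1) := by
      rw [fderiv_clm_apply (hd2diff v) (differentiableAt_const _)]
      simp
    have step1 : fderiv ℝ (fderiv ℝ (fderiv ℝ φ)) v (Pi.single j 1) (Pi.single k 1)
          (Pi.single l 1)
        = fderiv ℝ (fun y => fderiv ℝ (fderiv ℝ φ) y (Pi.single k 1)) v (Pi.single j 1)
          (Pi.single l 1) := by
      rw [hflipk]; rfl
    rw [step1]
    have hAdiff : ∀ y, DifferentiableAt ℝ
        (fun y => fderiv ℝ (fderiv ℝ φ) y (Pi.single k 1)) y :=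
      fun y => (hd2diff y).clm_apply (differentiableAt_const _)
    have step2 : fderiv ℝ (fun y => fderiv ℝ (fderiv ℝ φ) y (Pi.single k 1)) v (Pi.single j 1)
          (Pi.single l 1)
        = fderiv ℝ (fun y => fderiv ℝ (fderiv ℝ φ) y (Pi.single k 1) (Pi.single l 1)) v
          (Pi.single j 1) := by
      rw [fderiv_clm_apply (hAdiff v) (differentiableAt_const _)]
      simp
    rw [step2]
    have hinner : ∀ y, fderiv ℝ (fderiv ℝ φ) y (Pi.single k 1) (Pi.single l 1) = Φ2 k l y := by
      intro y
      have hflipl : fderiv ℝ (fun z => fderiv ℝ φ z (Pi.single l 1)) y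
          = (fderiv ℝ (fderiv ℝ φ) y).flip (Pi.single l 1) := by
        rw [fderiv_clm_apply (hC2.differentiable (by norm_num) y) (differentiableAt_const _)]
        simp
      have : fderiv ℝ (fderiv ℝ φ) y (Pi.single k 1) (Pi.single l 1)
          = fderiv ℝ (fun z => fderiv ℝ φ z (Pi.single l 1)) y (Pi.single k 1) := by
        rw [hflipl]; rfl
      rw [this]
      have hfun : (fun z => fderiv ℝ φ z (Pi.single l 1)) = P1 l := funext fun z => hfφ z l
      rw [hfun, hfP1]
    have hfun2 : (fun y => fderiv ℝ (fderiv ℝ φ) y (Pi.single k 1) (Pi.single l 1))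
        = fun y => Φ2 k l y := funext hinner
    rw [hfun2, hfΦ2]

  -- bounds on the derivatives of g
  have hg1b : ∀ x, |g1 x| ≤ δb⁻¹ := by
    intro x; have hx := h1 x
    rwa [iteratedDeriv_one, ← hg1def] at hx
  have hg2b : ∀ x, |g2 x| ≤ K / δb ^ 2 := by
    intro x; have hx := h2 x
    rwa [show (2:ℕ) = 1 + 1 from rfl, iteratedDeriv_succ, iteratedDeriv_one,
      ← hg1def, ← hg2def] at hx
  have hg3b : ∀ x, |g3 x| ≤ K / δb ^ 3 := by
    intro x; have hx := h3 x
    rwa [show (3:ℕ) = 1 + 1 + 1 from rfl, iteratedDeriv_succ, iteratedDeriv_succ,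
      iteratedDeriv_one, ← hg1def, ← hg2def, ← hg3def] at hx
  -- softmax weights at the point v
  set p : Fin d → ℝ := fun a => P β a v with hpdef
  set Q : Fin d → Fin d → ℝ := fun a b => dd a b + p a with hQdef
  have hp0 : ∀ a, 0 ≤ p a := fun a => P_nonneg hd β a v
  have hple : ∀ a, p a ≤ 1 := fun a => P_le_one hd β a v
  have hpsum : ∑ a, p a = 1 := P_sum hd β v
  have hPP : ∀ a, |p a| ≤ p a := fun a => by rw [abs_of_nonneg (hp0 a)]
  have hββ : |β| ≤ β := by rw [abs_of_nonneg hβpos.le]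
  have hββ2 : |β ^ 2| ≤ β ^ 2 := by rw [abs_of_nonneg (by positivity)]
  have hdd0 : ∀ a b : Fin d, (0:ℝ) ≤ dd a b := by
    intro a b; unfold dd; split <;> norm_num
  have hQb : ∀ a b, |dd a b - p a| ≤ Q a b := by
    intro a b
    have h := abs_add_le (dd a b) (-(p a))
    rw [← sub_eq_add_neg, abs_neg] at h
    rw [hQdef]
    calc |dd a b - p a| ≤ |dd a b| + |p a| := h
      _ = dd a b + p a := by rw [abs_of_nonneg (hdd0 a b), abs_of_nonneg (hp0 a)]
  -- elementary sum identities
  have hA : ∀ j, ∑ k, p k * Q j k = 2 * p j := by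
    intro j
    have e : ∀ k, p k * Q j k = (if j = k then p k else 0) + p k * p j := by
      intro k
      rcases eq_or_ne j k with h | h
      · subst h; simp [hQdef, dd]; ring
      · simp [hQdef, dd, h]
    rw [Finset.sum_congr rfl fun k _ => e k, Finset.sum_add_distrib,
      Finset.sum_ite_eq, ← Finset.sum_mul, hpsum]
    simp
    ring
  -- log d is at least log 2 ≥ 1/2
  have hL : (1:ℝ)/2 ≤ Real.log d := by
    have h2d : (2:ℝ) ≤ (d:ℝ) := by exact_mod_cast hd2
    have := Real.log_le_log (by norm_num : (0:ℝ) < 2) h2d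
    linarith [Real.log_two_gt_d9]
  -- rewrite the goal's function as φ
  have hgoalfun : (fun w : Fin d → ℝ => g (β⁻¹ * Real.log (∑ i, Real.exp (β * w i)))) = φ := rfl
  constructor
  · -- second-order bound
    rw [hgoalfun]
    have key2 : ∀ j k, |Φ2 j k v| ≤ K / δb ^ 2 * (p j * p k) + δb⁻¹ * (β * p k * Q j k) := by
      intro j k
      rw [hΦ2def]
      refine (abs_add_le _ _).trans ?_
      exact add_le_add (mul_abs_le (hg2b _) (mul_abs_le (hPP j) (hPP k)))
        (mul_abs_le (hg1b _) (mul_abs_le (mul_abs_le hββ (hPP k)) (hQb j k)))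
    have inner2 : ∀ j, ∑ k, (K / δb ^ 2 * (p j * p k) + δb⁻¹ * (β * p k * Q j k))
        = K / δb ^ 2 * p j + δb⁻¹ * (β * (2 * p j)) := by
      intro j
      rw [Finset.sum_add_distrib]
      congr 1
      · simp only [← Finset.mul_sum, hpsum, mul_one]
      · have e : ∀ k, δb⁻¹ * (β * p k * Q j k) = (δb⁻¹ * β) * (p k * Q j k) := fun k => by ring
        rw [Finset.sum_congr rfl fun k _ => e k, ← Finset.mul_sum, hA]
        ring
    calc ∑ j, ∑ k, |partial2 φ j k v| = ∑ j, ∑ k, |Φ2 j k v| := by simp only [hp2]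
      _ ≤ ∑ j, ∑ k, (K / δb ^ 2 * (p j * p k) + δb⁻¹ * (β * p k * Q j k)) :=
          Finset.sum_le_sum fun j _ => Finset.sum_le_sum fun k _ => key2 j k
      _ = K / δb ^ 2 + δb⁻¹ * (β * 2) := by
          rw [Finset.sum_congr rfl fun j _ => inner2 j, Finset.sum_add_distrib]
          simp only [← Finset.mul_sum, hpsum, mul_one]
      _ ≤ 30 * (K + 1) * Real.log d / δb ^ 2 := by
          rw [hβdef]
          have heq : K / δb ^ 2 + δb⁻¹ * (Real.log d / δb * 2)
              = (K + 2 * Real.log d) / δb ^ 2 := by field_simp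
          rw [heq]
          rw [div_le_div_iff₀ (by positivity) (by positivity)]
          have hKL : K ≤ 2 * K * Real.log d := by nlinarith [hK, hL]
          nlinarith [hK, hL, hδb, sq_nonneg δb]
  · -- third-order bound
    rw [hgoalfun]
    have habs_sub : ∀ x y : ℝ, |x - y| ≤ |x| + |y| := fun x y => by
      simpa [sub_eq_add_neg] using abs_add_le x (-y)
    have key3 : ∀ j k l, |Φ3 j k l v| ≤
        K / δb ^ 3 * (p j * (p k * p l))
        + K / δb ^ 2 * (β * (p k * (p l * Q j l)))
        + K / δb ^ 2 * (β * (p l * (p k * Q j k)))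
        + δb⁻¹ * (β ^ 2 * (p l * (p k * Q j k)))
        + δb⁻¹ * (β ^ 2 * (Q k l * (p l * Q j l)))
        + K / δb ^ 2 * (β * (p l * (Q k l * p j))) := by
      intro j k l
      rw [hΦ3def]
      have tri : ∀ a b c d' e f : ℝ,
          |a + b + c - d' + e + f| ≤ |a| + |b| + |c| + |d'| + |e| + |f| := by
        intro a b c d' e f
        have t1 := abs_add_le (a + b + c - d' + e) f
        have t2 := abs_add_le (a + b + c - d') e
        have t3 := habs_sub (a + b + c) d'
        have t4 := abs_add_le (a + b) c
        have t5 := abs_add_le a b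
        linarith
      refine (tri _ _ _ _ _ _).trans ?_
      refine add_le_add (add_le_add (add_le_add (add_le_add (add_le_add ?_ ?_) ?_) ?_) ?_) ?_
      · exact mul_abs_le (hg3b _) (mul_abs_le (hPP j) (mul_abs_le (hPP k) (hPP l)))
      · exact mul_abs_le (hg2b _) (mul_abs_le hββ (mul_abs_le (hPP k)
          (mul_abs_le (hPP l) (hQb j l))))
      · exact mul_abs_le (hg2b _) (mul_abs_le hββ (mul_abs_le (hPP l)
          (mul_abs_le (hPP k) (hQb j k))))
      · exact mul_abs_le (hg1b _) (mul_abs_le hββ2 (mul_abs_le (hPP l)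
          (mul_abs_le (hPP k) (hQb j k))))
      · exact mul_abs_le (hg1b _) (mul_abs_le hββ2 (mul_abs_le (hQb k l)
          (mul_abs_le (hPP l) (hQb j l))))
      · exact mul_abs_le (hg2b _) (mul_abs_le hββ (mul_abs_le (hPP l)
          (mul_abs_le (hQb k l) (hPP j))))
    -- elementary sum identities for the triple sums
    have hE : ∀ j, ∑ k, p k * dd j k = p j := by
      intro j
      have e : ∀ k, p k * dd j k = if j = k then p k else 0 := by
        intro k; simp [dd, mul_ite, mul_one, mul_zero]
      rw [Finset.sum_congr rfl fun k _ => e k, Finset.sum_ite_eq]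
      simp
    have hB : ∀ j k, ∑ l, Q k l * (p l * Q j l) = p k * dd j k + 3 * (p k * p j) := by
      intro j k
      have e : ∀ l, Q k l * (p l * Q j l)
          = (if k = l then p l * dd j l else 0) + ((if k = l then p l * p j else 0)
            + (p k * (p l * dd j l) + p k * (p l * p j))) := by
        intro l
        simp only [hQdef]
        rcases eq_or_ne k l with h | h
        · have hd1 : dd k l = 1 := by simp [dd, h]
          rw [hd1, if_pos h, if_pos h]; ring
        · have hd1 : dd k l = 0 := by simp [dd, h]
          rw [hd1, if_neg h, if_neg h]; ring
      rw [Finset.sum_congr rfl fun l _ => e l, Finset.sum_add_distrib,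
        Finset.sum_add_distrib, Finset.sum_add_distrib, Finset.sum_ite_eq,
        Finset.sum_ite_eq]
      have e3 : ∑ l, p k * (p l * dd j l) = p k * p j := by
        have e4 : ∀ l, p l * dd j l = if j = l then p l else 0 := by
          intro l; simp [dd, mul_ite, mul_one, mul_zero]
        rw [← Finset.mul_sum, Finset.sum_congr rfl fun l _ => e4 l, Finset.sum_ite_eq]
        simp
      have e5 : ∑ l, p k * (p l * p j) = p k * p j := by
        rw [← Finset.mul_sum, ← Finset.sum_mul, hpsum, one_mul]
      rw [e3, e5]
      simp only [Finset.mem_univ, ite_true]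
      ring
    have hC : ∀ j k, ∑ l, p l * (Q k l * p j) = 2 * (p k * p j) := by
      intro j k
      have e : ∀ l, p l * (Q k l * p j) = (if k = l then p l * p j else 0) + p l * (p k * p j) := by
        intro l
        simp only [hQdef]
        rcases eq_or_ne k l with h | h
        · have hd1 : dd k l = 1 := by simp [dd, h]
          rw [hd1, if_pos h]; ring
        · have hd1 : dd k l = 0 := by simp [dd, h]
          rw [hd1, if_neg h]; ring
      rw [Finset.sum_congr rfl fun l _ => e l, Finset.sum_add_distrib, Finset.sum_ite_eq,
        ← Finset.sum_mul, hpsum, one_mul]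
      simp only [Finset.mem_univ, ite_true]
      ring
    -- the full sum
    calc ∑ j, ∑ k, ∑ l, |partial3 φ j k l v| = ∑ j, ∑ k, ∑ l, |Φ3 j k l v| := by
          simp only [hp3]
      _ ≤ ∑ j : Fin d, ∑ k : Fin d, ∑ l : Fin d,
          (K / δb ^ 3 * (p j * (p k * p l))
            + K / δb ^ 2 * (β * (p k * (p l * Q j l)))
            + K / δb ^ 2 * (β * (p l * (p k * Q j k)))
            + δb⁻¹ * (β ^ 2 * (p l * (p k * Q j k)))
            + δb⁻¹ * (β ^ 2 * (Q k l * (p l * Q j l)))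
            + K / δb ^ 2 * (β * (p l * (Q k l * p j)))) :=
          Finset.sum_le_sum fun j _ => Finset.sum_le_sum fun k _ =>
            Finset.sum_le_sum fun l _ => key3 j k l
      _ = K / δb ^ 3 + K / δb ^ 2 * β * 6 + δb⁻¹ * β ^ 2 * 6 := by
          simp only [Finset.sum_add_distrib, ← Finset.mul_sum, ← Finset.sum_mul,
            hA, hB, hC, hE, hpsum, one_mul, mul_one]
          ring
      _ ≤ 30 * (K + 1) * Real.log d ^ 2 / δb ^ 3 := by
          rw [hβdef]
          have heq : K / δb ^ 3 + K / δb ^ 2 * (Real.log d / δb) * 6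
              + δb⁻¹ * (Real.log d / δb) ^ 2 * 6
              = (K + 6 * K * Real.log d + 6 * Real.log d ^ 2) / δb ^ 3 := by
            field_simp
          rw [heq]
          gcongr
          have c1 : K ≤ 4 * K * Real.log d ^ 2 := by
            nlinarith [mul_nonneg (mul_nonneg hK
              (show (0:ℝ) ≤ 2 * Real.log d - 1 by linarith))
              (show (0:ℝ) ≤ 2 * Real.log d + 1 by linarith)]
          have c2 : 6 * K * Real.log d ≤ 12 * K * Real.log d ^ 2 := by
            nlinarith [mul_nonneg (mul_nonneg (mul_nonneg (show (0:ℝ) ≤ 6 by norm_num) hK)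
              hLpos.le) (show (0:ℝ) ≤ 2 * Real.log d - 1 by linarith)]
          have c3 : 0 ≤ K * Real.log d ^ 2 := mul_nonneg hK (sq_nonneg _)
          nlinarith [sq_nonneg (Real.log d), c1, c2, c3]
end

section
/- Norm contraction of the path-lifting operator (Lemma 4.3): Let T be a finite complete tree of strings over the finite alphabet A, with leaf set Leaves(T), and let π: T → (0,1] be given by π(w) = P(X^{-1}_{−|w|} = w) for a stationary process (X_k); in particular π(y) = Σ_{w ∈ Leaves(T), w ⪰ y} π(w) for every y ∈ T, and π(x) ≥ π(y) whenever x ⪯ y. Define the linear map S: ℝ^{Leaves(T)} → ℝ^T by S e_w := Σ_{x ∈ Path_T(w)} √(π(w)/π(x))·e_x, where Path_T(w) := { x ∈ T : x ⪯ w }, and extend S to ℝ^{Leaves(T)} ⊗ ℝ^A by tensoring with the identity on ℝ^A. Then for any two block-diagonal matrices Q := Σ_{w∈Leaves(T)} e_w e_w' ⊗ Q_w and Q̃ := Σ_{w∈Leaves(T)} e_w e_w' ⊗ Q̃_w with Q_w, Q̃_w ∈ ℝ^{A×A}, one has ‖S(Q − Q̃)S'‖_∞ ≤ max_{w∈Leaves(T)}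 ‖Q_w − Q̃_w‖_∞, where ‖·‖_∞ denotes the entrywise maximum-absolute-value norm on matrices. -/
open Matrix
open scoped BigOperators Classical

/- Strings over the alphabet `A` are represented as lists with the most recent symbol
first, so the suffix order `⪯` of the paper is the prefix order `<+:` on lists;
the parent of a nonempty string is `dropLast`. -/

/-- `T` is a tree of (reversed) strings: closed under taking parents. -/
def IsTreeOfStrings {A : Type*} (T : Finset (List A)) : Prop :=
  ∀ w ∈ T, w ≠ ([] : List A) → w.dropLast ∈ T

/-- `T` is complete: every node is either a leaf or has all `|A|` children. -/
def IsCompleteTree {A : Type*} [Fintype A] (T : Finset (List A)) : Prop :=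
  ∀ w ∈ T, (∀ a : A, w ++ [a] ∉ T) ∨ (∀ a : A, w ++ [a] ∈ T)

/-- `w` is a leaf of `T`. -/
def IsLeafOf {A : Type*} (T : Finset (List A)) (w : List A) : Prop :=
  w ∈ T ∧ ∀ a : A, w ++ [a] ∉ T

/-- The path-lifting operator `S : ℝ^{Leaves(T)} → ℝ^T`, tensored with the identity on
`ℝ^A`, viewed as a matrix: `S e_w := Σ_{x ∈ Path_T(w)} √(π(w)/π(x)) e_x`. -/
noncomputable def pathLift {A : Type*} [Fintype A] (T Lv : Finset (List A))
    (π : List A → ℝ) :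
    Matrix ({w // w ∈ T} × A) ({w // w ∈ Lv} × A) ℝ :=
  fun p q =>
    if (p.1 : List A) <+: (q.1 : List A) ∧ p.2 = q.2 then
      Real.sqrt (π q.1 / π p.1) else 0

/-- A block-diagonal matrix `Σ_{w ∈ Leaves(T)} e_w e_w' ⊗ Q_w` on `ℝ^{Leaves(T)} ⊗ ℝ^A`. -/
noncomputable def blockDiag {A : Type*} [Fintype A] (Lv : Finset (List A))
    (Q : List A → Matrix A A ℝ) :
    Matrix ({w // w ∈ Lv} × A) ({w // w ∈ Lv} × A) ℝ :=
  fun p q => if p.1 = q.1 then Q p.1 p.2 q.2 else 0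

lemma blockDiag_sub' {A : Type*} [Fintype A] (Lv : Finset (List A))
    (Q Qt : List A → Matrix A A ℝ) :
    _root_.blockDiag Lv Q - _root_.blockDiag Lv Qt
      = _root_.blockDiag Lv (fun w => Q w - Qt w) := by
  ext p q
  simp only [Matrix.sub_apply, _root_.blockDiag]
  split_ifs <;> simp

lemma entry_formula' {A : Type*} [Fintype A] [DecidableEq A]
    (T Lv : Finset (List A)) (π : List A → ℝ) (D : List A → Matrix A A ℝ)
    (p q : {w // w ∈ T} × A) :
    (pathLift T Lv π * _root_.blockDiag Lv D * (pathLift T Lv π)ᵀ) p q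
      = ∑ w : {w // w ∈ Lv},
          (if (p.1 : List A) <+: (w : List A) ∧ (q.1 : List A) <+: (w : List A)
            then Real.sqrt (π w / π p.1) * Real.sqrt (π w / π q.1) else 0)
          * D w p.2 q.2 := by
  classical
  simp only [Matrix.mul_apply, Matrix.transpose_apply, pathLift, _root_.blockDiag,
    Fintype.sum_prod_type, ite_and, ite_mul, zero_mul, mul_ite, mul_zero,
    Finset.sum_ite_eq, Finset.sum_ite_eq', Finset.mem_univ, if_true]
  refine Finset.sum_congr rfl fun w _ => ?_
  by_cases h1 : (q.1 : List A) <+: (w : List A) <;>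
    by_cases h2 : (p.1 : List A) <+: (w : List A) <;>
      simp [h1, h2, Finset.sum_ite_eq, Finset.sum_ite_eq', mul_comm, mul_assoc, mul_left_comm]

/-- **Norm contraction of the path-lifting operator (Lemma 4.3).**
For block-diagonal `Q, Q̃` over the leaves of a finite complete tree `T`,
`‖S (Q − Q̃) S'‖_∞ ≤ max_{w ∈ Leaves(T)} ‖Q_w − Q̃_w‖_∞`, where `‖·‖_∞` is the
entrywise maximum-absolute-value norm. -/
theorem pathLift_norm_contraction
    {A : Type*} [Fintype A] [DecidableEq A] [Nonempty A]
    (T : Finset (List A)) (hroot : ([] : List A) ∈ T)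
    (htree : IsTreeOfStrings T) (hcomplete : IsCompleteTree T)
    (π : List A → ℝ)
    (hπpos : ∀ w ∈ T, 0 < π w) (hπle1 : ∀ w ∈ T, π w ≤ 1)
    (hπdecomp : ∀ y ∈ T,
      π y = ∑ w ∈ T.filter (fun w => IsLeafOf T w ∧ y <+: w), π w)
    (hπmono : ∀ x ∈ T, ∀ y ∈ T, x <+: y → π y ≤ π x)
    (Q Qt : List A → Matrix A A ℝ) :
    (⨆ p : {w // w ∈ T} × A, ⨆ q : {w // w ∈ T} × A,
        |(pathLift T (T.filter (fun w => IsLeafOf T w)) π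
            * (blockDiag (T.filter (fun w => IsLeafOf T w)) Q
                - blockDiag (T.filter (fun w => IsLeafOf T w)) Qt)
            * (pathLift T (T.filter (fun w => IsLeafOf T w)) π)ᵀ) p q|)
      ≤ ⨆ w : {w // w ∈ T.filter (fun w => IsLeafOf T w)},
          ⨆ ab : A × A, |(Q w - Qt w) ab.1 ab.2| := by
  classical
  set Lv := T.filter (fun w => IsLeafOf T w) with hLvdef
  have hLvT : ∀ w ∈ Lv, w ∈ T := fun w hw => (Finset.mem_filter.mp hw).1
  -- leaves are nonempty
  obtain ⟨w0, hw0T, hw0max⟩ := Finset.exists_max_image T (fun w => w.length) ⟨[], hroot⟩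
  have hw0 : w0 ∈ Lv := by
    rw [hLvdef, Finset.mem_filter]
    refine ⟨hw0T, hw0T, fun a ha => ?_⟩
    have h := hw0max _ ha
    simp only [List.length_append, List.length_cons, List.length_nil] at h
    omega
  set M := ⨆ w : {w // w ∈ Lv}, ⨆ ab : A × A, |(Q ↑w - Qt ↑w) ab.1 ab.2| with hMdef
  have hterm : ∀ w : {w // w ∈ Lv}, ∀ a b : A, |(Q ↑w - Qt ↑w) a b| ≤ M := by
    intro w a b
    calc |(Q ↑w - Qt ↑w) a b|
        ≤ ⨆ ab : A × A, |(Q ↑w - Qt ↑w) ab.1 ab.2| :=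
          le_ciSup (f := fun ab : A × A => |(Q ↑w - Qt ↑w) ab.1 ab.2|)
            (Set.Finite.bddAbove (Set.finite_range _)) (a, b)
      _ ≤ M := by
          rw [hMdef]
          exact le_ciSup (f := fun w : {w // w ∈ Lv} => ⨆ ab : A × A, |(Q ↑w - Qt ↑w) ab.1 ab.2|)
            (Set.Finite.bddAbove (Set.finite_range _)) w
  have hM0 : 0 ≤ M :=
    le_trans (abs_nonneg _)
      (hterm ⟨w0, hw0⟩ (Classical.arbitrary A) (Classical.arbitrary A))
  -- key sum bound, comparable case
  have key2 : ∀ x ∈ T, ∀ y ∈ T, x <+: y →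
      (∑ w : {w // w ∈ Lv},
        (if x <+: (w : List A) ∧ y <+: (w : List A)
          then Real.sqrt (π w / π x) * Real.sqrt (π w / π y) else 0)) ≤ 1 := by
    intro x hx y hy hxy
    have hπx := hπpos x hx
    have hπy := hπpos y hy
    have hmono := hπmono x hx y hy hxy
    have hstep : ∀ w : {w // w ∈ Lv},
        (if x <+: (w : List A) ∧ y <+: (w : List A)
          then Real.sqrt (π w / π x) * Real.sqrt (π w / π y) else 0)
        = (if y <+: (w : List A) then π w else 0)
            / (Real.sqrt (π x) * Real.sqrt (π y)) := by
      intro w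
      have hπw : (0:ℝ) ≤ π w := (hπpos _ (hLvT _ w.2)).le
      by_cases h : y <+: (w : List A)
      · rw [if_pos ⟨hxy.trans h, h⟩, if_pos h,
          Real.sqrt_div hπw, Real.sqrt_div hπw, div_mul_div_comm,
          Real.mul_self_sqrt hπw]
      · rw [if_neg (fun hc => h hc.2), if_neg h, zero_div]
    calc (∑ w : {w // w ∈ Lv},
          (if x <+: (w : List A) ∧ y <+: (w : List A)
            then Real.sqrt (π w / π x) * Real.sqrt (π w / π y) else 0))
        = (∑ w : {w // w ∈ Lv}, (if y <+: (w : List A) then π w else 0))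
            / (Real.sqrt (π x) * Real.sqrt (π y)) := by
          rw [Finset.sum_div]; exact Finset.sum_congr rfl fun w _ => hstep w
      _ = π y / (Real.sqrt (π x) * Real.sqrt (π y)) := by
          have hnum : (∑ w : {w // w ∈ Lv}, (if y <+: (w : List A) then π w else 0))
              = π y := by
            rw [Finset.sum_coe_sort Lv (fun w => if y <+: w then π w else 0),
              ← Finset.sum_filter, hπdecomp y hy]
            refine Finset.sum_congr ?_ fun _ _ => rfl
            ext w
            simp [hLvdef, Finset.mem_filter, and_assoc]
          rw [hnum]
      _ ≤ 1 := by
          rw [div_le_one (by positivity)]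
          calc π y = Real.sqrt (π y) * Real.sqrt (π y) :=
                (Real.mul_self_sqrt hπy.le).symm
            _ ≤ Real.sqrt (π x) * Real.sqrt (π y) :=
                mul_le_mul_of_nonneg_right (Real.sqrt_le_sqrt hmono)
                  (Real.sqrt_nonneg _)
  have key : ∀ x ∈ T, ∀ y ∈ T,
      (∑ w : {w // w ∈ Lv},
        (if x <+: (w : List A) ∧ y <+: (w : List A)
          then Real.sqrt (π w / π x) * Real.sqrt (π w / π y) else 0)) ≤ 1 := by
    intro x hx y hy
    by_cases hxy : x <+: y
    · exact key2 x hx y hy hxy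
    by_cases hyx : y <+: x
    · calc (∑ w : {w // w ∈ Lv},
            (if x <+: (w : List A) ∧ y <+: (w : List A)
              then Real.sqrt (π w / π x) * Real.sqrt (π w / π y) else 0))
          = (∑ w : {w // w ∈ Lv},
            (if y <+: (w : List A) ∧ x <+: (w : List A)
              then Real.sqrt (π w / π y) * Real.sqrt (π w / π x) else 0)) := by
            refine Finset.sum_congr rfl fun w _ => ?_
            by_cases h : x <+: (w : List A) ∧ y <+: (w : List A)
            · rw [if_pos h, if_pos ⟨h.2, h.1⟩, mul_comm]
            · rw [if_neg h, if_neg fun hc => h ⟨hc.2, hc.1⟩]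
        _ ≤ 1 := key2 y hy x hx hyx
    · have : ∀ w : {w // w ∈ Lv},
          (if x <+: (w : List A) ∧ y <+: (w : List A)
            then Real.sqrt (π w / π x) * Real.sqrt (π w / π y) else 0) = 0 := by
        intro w
        rw [if_neg]
        rintro ⟨h1, h2⟩
        rcases List.prefix_or_prefix_of_prefix h1 h2 with h | h
        · exact hxy h
        · exact hyx h
      rw [Finset.sum_congr rfl fun w _ => this w]
      simp
  -- main bound
  haveI : Nonempty {w // w ∈ T} := ⟨⟨[], hroot⟩⟩
  refine ciSup_le fun p => ciSup_le fun q => ?_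
  rw [blockDiag_sub' Lv Q Qt, entry_formula' T Lv π (fun w => Q w - Qt w) p q]
  calc |∑ w : {w // w ∈ Lv},
          (if (p.1 : List A) <+: (w : List A) ∧ (q.1 : List A) <+: (w : List A)
            then Real.sqrt (π w / π p.1) * Real.sqrt (π w / π q.1) else 0)
          * (Q ↑w - Qt ↑w) p.2 q.2|
      ≤ ∑ w : {w // w ∈ Lv},
          |(if (p.1 : List A) <+: (w : List A) ∧ (q.1 : List A) <+: (w : List A)
            then Real.sqrt (π w / π p.1) * Real.sqrt (π w / π q.1) else 0)
          * (Q ↑w - Qt ↑w) p.2 q.2| := Finset.abs_sum_le_sum_abs _ _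
    _ ≤ ∑ w : {w // w ∈ Lv},
          (if (p.1 : List A) <+: (w : List A) ∧ (q.1 : List A) <+: (w : List A)
            then Real.sqrt (π w / π p.1) * Real.sqrt (π w / π q.1) else 0) * M := by
        refine Finset.sum_le_sum fun w _ => ?_
        rw [abs_mul]
        split_ifs with h
        · rw [abs_of_nonneg (by positivity)]
          exact mul_le_mul_of_nonneg_left (hterm w p.2 q.2) (by positivity)
        · simp
    _ = (∑ w : {w // w ∈ Lv},
          (if (p.1 : List A) <+: (w : List A) ∧ (q.1 : List A) <+: (w : List A)
            then Real.sqrt (π w / π p.1) * Real.sqrt (π w / π q.1) else 0)) * M :=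
        (Finset.sum_mul _ _ _).symm
    _ ≤ 1 * M := mul_le_mul_of_nonneg_right (key _ p.1.2 _ q.1.2) hM0
    _ = M := one_mul M
end

section
/- Comparison of multinomial covariance matrices (Lemma F.1): Let A be a finite set and let p, q ∈ ℝ^A be probability vectors (nonnegative entries summing to 1). Then, in the positive semidefinite order, diag(p) − p·p' ⪯ diag(q) − q·q' + (2√|A| + 1)·max_{a∈A} |p(a) − q(a)|·I_{A×A}. -/
open scoped BigOperators
open scoped Matrix

/-- **Comparison of multinomial covariance matrices (Lemma F.1).**
Let `A` be a finite set and `p, q ∈ ℝ^A` probability vectors. Then, in the positive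
semidefinite order,
`diag p − p pᵀ ⪯ diag q − q qᵀ + (2√|A| + 1) · max_a |p a − q a| · I`. -/
theorem multinomial_covariance_comparison
    {A : Type*} [Fintype A] [DecidableEq A] [Nonempty A]
    (p q : A → ℝ)
    (hp0 : ∀ a, 0 ≤ p a) (hq0 : ∀ a, 0 ≤ q a)
    (hp1 : ∑ a, p a = 1) (hq1 : ∑ a, q a = 1) :
    (Matrix.diagonal q - Matrix.vecMulVec q q
        + ((2 * Real.sqrt (Fintype.card A) + 1)
            * (⨆ a : A, |p a - q a|)) • (1 : Matrix A A ℝ)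
      - (Matrix.diagonal p - Matrix.vecMulVec p p)).PosSemidef := by
  classical
  set n : ℕ := Fintype.card A with hn
  set ε : ℝ := ⨆ a : A, |p a - q a| with hεdef
  have hbdd : BddAbove (Set.range fun a : A => |p a - q a|) :=
    (Set.finite_range _).bddAbove
  have hε : ∀ a, |p a - q a| ≤ ε := fun a => le_ciSup hbdd a
  have hε0 : 0 ≤ ε := le_trans (abs_nonneg _) (hε (Classical.arbitrary A))
  set c : ℝ := (2 * Real.sqrt n + 1) * ε with hc
  rw [Matrix.posSemidef_iff_dotProduct_mulVec]
  constructor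
  · -- Hermitian
    have hv : ∀ v : A → ℝ, (Matrix.vecMulVec v v).IsHermitian := by
      intro v
      unfold Matrix.IsHermitian
      ext i j
      simp [Matrix.conjTranspose_apply, Matrix.vecMulVec_apply, mul_comm]
    have hsm : (c • (1 : Matrix A A ℝ)).IsHermitian := by
      unfold Matrix.IsHermitian
      ext i j
      simp [Matrix.conjTranspose_apply, Matrix.one_apply, eq_comm]
    exact (((Matrix.isHermitian_diagonal q).sub (hv q)).add hsm).sub
      ((Matrix.isHermitian_diagonal p).sub (hv p))
  · intro x
    have hstar : star x = x := by simp
    rw [hstar]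
    have expand :
        x ⬝ᵥ ((Matrix.diagonal q - Matrix.vecMulVec q q
            + c • (1 : Matrix A A ℝ)
          - (Matrix.diagonal p - Matrix.vecMulVec p p)) *ᵥ x)
        = (∑ a, (q a - p a) * x a ^ 2) + c * ∑ a, x a ^ 2
            + ((p ⬝ᵥ x) ^ 2 - (q ⬝ᵥ x) ^ 2) := by
      simp only [Matrix.sub_mulVec, Matrix.add_mulVec, Matrix.smul_mulVec,
        Matrix.one_mulVec, dotProduct_sub, dotProduct_add,
        dotProduct_smul]
      have hdiag : ∀ v : A → ℝ, x ⬝ᵥ (Matrix.diagonal v *ᵥ x) = ∑ a, v a * x a ^ 2 := by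
        intro v
        simp [dotProduct, Matrix.mulVec_diagonal]
        congr 1; ext a; ring
      have hvmv : ∀ v : A → ℝ, x ⬝ᵥ (Matrix.vecMulVec v v *ᵥ x) = (v ⬝ᵥ x) ^ 2 := by
        intro v
        simp only [dotProduct, Matrix.mulVec, Matrix.vecMulVec_apply]
        rw [sq]
        rw [Finset.sum_mul]
        congr 1; ext a
        simp [dotProduct, Finset.mul_sum, Finset.sum_mul]
        congr 1; ext b; ring
      rw [hdiag, hdiag, hvmv, hvmv]
      have : x ⬝ᵥ x = ∑ a, x a ^ 2 := by
        simp [dotProduct, sq]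
      rw [this]
      have hsplit : ∑ a, (q a - p a) * x a ^ 2
          = ∑ a, q a * x a ^ 2 - ∑ a, p a * x a ^ 2 := by
        rw [← Finset.sum_sub_distrib]
        exact Finset.sum_congr rfl fun a _ => by ring
      rw [hsplit, smul_eq_mul]
      ring
    rw [expand]
    set s : ℝ := ∑ a, x a ^ 2 with hs
    have hs0 : 0 ≤ s := Finset.sum_nonneg fun a _ => sq_nonneg _
    have hxs : ∀ a, |x a| ≤ Real.sqrt s := by
      intro a
      rw [← Real.sqrt_sq_eq_abs]
      exact Real.sqrt_le_sqrt (Finset.single_le_sum (fun b _ => sq_nonneg (x b))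
        (Finset.mem_univ a))
    have hss : Real.sqrt s * Real.sqrt s = s := Real.mul_self_sqrt hs0
    -- bound 1: diagonal part
    have h1 : -(ε * s) ≤ ∑ a, (q a - p a) * x a ^ 2 := by
      have heq : -(ε * s) = ∑ a, -(ε * x a ^ 2) := by
        rw [hs, Finset.mul_sum, ← Finset.sum_neg_distrib]
      rw [heq]
      apply Finset.sum_le_sum
      intro a _
      have h := abs_le.mp (hε a)
      nlinarith [sq_nonneg (x a)]
    -- bound on |v ⬝ᵥ x| for probability vector v
    have hprob : ∀ v : A → ℝ, (∀ a, 0 ≤ v a) → (∑ a, v a = 1) →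
        |v ⬝ᵥ x| ≤ Real.sqrt s := by
      intro v hv0 hv1
      calc |v ⬝ᵥ x| ≤ ∑ a, |v a * x a| := Finset.abs_sum_le_sum_abs _ _
        _ ≤ ∑ a, v a * Real.sqrt s := by
            apply Finset.sum_le_sum
            intro a _
            rw [abs_mul, abs_of_nonneg (hv0 a)]
            exact mul_le_mul_of_nonneg_left (hxs a) (hv0 a)
        _ = Real.sqrt s := by rw [← Finset.sum_mul, hv1, one_mul]
    -- bound 2: |(p-q)⬝x| ≤ ε √n √s
    have h2 : |p ⬝ᵥ x - q ⬝ᵥ x| ≤ ε * (Real.sqrt n * Real.sqrt s) := by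
      have : p ⬝ᵥ x - q ⬝ᵥ x = ∑ a, (p a - q a) * x a := by
        simp only [dotProduct, ← Finset.sum_sub_distrib]
        exact Finset.sum_congr rfl fun a _ => by ring
      rw [this]
      calc |∑ a, (p a - q a) * x a| ≤ ∑ a, |(p a - q a) * x a| :=
            Finset.abs_sum_le_sum_abs _ _
        _ ≤ ∑ a, ε * |x a| := by
            apply Finset.sum_le_sum
            intro a _
            rw [abs_mul]
            exact mul_le_mul_of_nonneg_right (hε a) (abs_nonneg _)
        _ = ε * ∑ a, |x a| := by rw [Finset.mul_sum]
        _ ≤ ε * (Real.sqrt n * Real.sqrt s) := by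
            apply mul_le_mul_of_nonneg_left _ hε0
            have hCS : (∑ a, |x a|) ^ 2 ≤ (n : ℝ) * ∑ a, |x a| ^ 2 := by
              have := sq_sum_le_card_mul_sum_sq (s := (Finset.univ : Finset A))
                (f := fun a => |x a|)
              simpa [hn] using this
            have habs : (∑ a, |x a| ^ 2) = s := by
              simp [hs, sq_abs]
            rw [habs] at hCS
            have h0 : 0 ≤ ∑ a, |x a| := Finset.sum_nonneg fun a _ => abs_nonneg _
            nlinarith [Real.sq_sqrt (Nat.cast_nonneg n : (0:ℝ) ≤ n),
              Real.sq_sqrt hs0, Real.sqrt_nonneg (n : ℝ), Real.sqrt_nonneg s,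
              mul_nonneg (Real.sqrt_nonneg (n:ℝ)) (Real.sqrt_nonneg s)]
    -- bound 3: the squared dot products
    have h3 : -(2 * Real.sqrt n * ε * s) ≤ (p ⬝ᵥ x) ^ 2 - (q ⬝ᵥ x) ^ 2 := by
      have hfac : (p ⬝ᵥ x) ^ 2 - (q ⬝ᵥ x) ^ 2
          = (p ⬝ᵥ x - q ⬝ᵥ x) * (p ⬝ᵥ x + q ⬝ᵥ x) := by ring
      have hp' := hprob p hp0 hp1
      have hq' := hprob q hq0 hq1
      have habs : |(p ⬝ᵥ x - q ⬝ᵥ x) * (p ⬝ᵥ x + q ⬝ᵥ x)|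
          ≤ ε * (Real.sqrt n * Real.sqrt s) * (2 * Real.sqrt s) := by
        rw [abs_mul]
        apply mul_le_mul h2 _ (abs_nonneg _)
          (mul_nonneg hε0 (mul_nonneg (Real.sqrt_nonneg _) (Real.sqrt_nonneg _)))
        calc |p ⬝ᵥ x + q ⬝ᵥ x| ≤ |p ⬝ᵥ x| + |q ⬝ᵥ x| := abs_add_le _ _
          _ ≤ 2 * Real.sqrt s := by linarith
      rw [hfac]
      have heq : ε * (Real.sqrt n * Real.sqrt s) * (2 * Real.sqrt s)
          = 2 * Real.sqrt n * ε * s := by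
        rw [show ε * (Real.sqrt n * Real.sqrt s) * (2 * Real.sqrt s)
            = 2 * Real.sqrt n * ε * (Real.sqrt s * Real.sqrt s) by ring, hss]
      rw [heq] at habs
      have := neg_abs_le ((p ⬝ᵥ x - q ⬝ᵥ x) * (p ⬝ᵥ x + q ⬝ᵥ x))
      linarith
    have hc' : c * s = (2 * Real.sqrt n * ε) * s + ε * s := by rw [hc]; ring
    linarith
end
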